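/- Let T ∈ (0,∞), let y : [0,T) → ℝ be continuous on [0,T), differentiable on (0,T), with y(t) > 0 for all t ∈ [0,T), and let a > 0, b > 0, q > 1 and K > 1. Assume y'(t) ≥ a·y(t)^q − b for all t ∈ (0,T) and y(0) > (K b / a)^{1/q}. Then T ≤ K · y(0)^{1−q} / (a (K−1)(q−1)). -/

import Mathlib

open Real

/-- A positive function satisfying `y' ≥ a y^q - b` with `q > 1` on `(0,T)` and
starting above the threshold `(Kb/a)^{1/q}` forces `T ≤ K y(0)^{1-q} / (a (K-1)(q-1))`. -/
theorem ode_blowup_time_bound_with_threshold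
    (T : ℝ) (hT : 0 < T) (y : ℝ → ℝ) (a b q K : ℝ)
    (ha : 0 < a) (hb : 0 < b) (hq : 1 < q) (hK : 1 < K)
    (hcont : ContinuousOn y (Set.Ico 0 T))
    (hdiff : ∀ t ∈ Set.Ioo (0 : ℝ) T, DifferentiableAt ℝ y t)
    (hpos : ∀ t ∈ Set.Ico (0 : ℝ) T, 0 < y t)
    (hineq : ∀ t ∈ Set.Ioo (0 : ℝ) T, a * y t ^ q - b ≤ deriv y t)
    (hy0 : (K * b / a) ^ (1 / q) < y 0) :
    T ≤ K * y 0 ^ (1 - q) / (a * (K - 1) * (q - 1)) := by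
  set M : ℝ := (K * b / a) ^ (1 / q) with hMdef
  have hq0 : (0 : ℝ) < q := by linarith
  have hKba : (0 : ℝ) < K * b / a := by positivity
  have hMpos : 0 < M := Real.rpow_pos_of_pos hKba _
  have hMq : M ^ q = K * b / a := by
    rw [hMdef, ← Real.rpow_mul hKba.le, one_div_mul_cancel hq0.ne', Real.rpow_one]
  -- Step 1 : y stays above M
  have key : ∀ t ∈ Set.Ico (0 : ℝ) T, M < y t := by
    by_contra hcon
    push_neg at hcon
    obtain ⟨t₀, ht₀, hyt₀⟩ := hcon
    set A : Set ℝ := {t | t ∈ Set.Ico (0 : ℝ) T ∧ y t ≤ M} with hAdef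
    have hA_ne : A.Nonempty := ⟨t₀, ht₀, hyt₀⟩
    have hA_bdd : BddBelow A := ⟨0, fun t ht => ht.1.1⟩
    set s := sInf A with hsdef
    have hs0 : 0 ≤ s := le_csInf hA_ne fun t ht => ht.1.1
    have hst₀ : s ≤ t₀ := csInf_le hA_bdd ⟨ht₀, hyt₀⟩
    have hsT : s < T := lt_of_le_of_lt hst₀ ht₀.2
    have hsmem : s ∈ Set.Ico (0 : ℝ) T := ⟨hs0, hsT⟩
    -- y s ≤ M
    have hys : y s ≤ M := by
      by_contra hys
      push_neg at hys
      have hct : ContinuousWithinAt y (Set.Ico 0 T) s := hcont s hsmem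
      have hev : ∀ᶠ t in nhdsWithin s (Set.Ico 0 T), M < y t :=
        hct.eventually (eventually_gt_nhds hys)
      rw [Filter.eventually_iff, Metric.mem_nhdsWithin_iff] at hev
      obtain ⟨ε, hε, hball⟩ := hev
      have : s + ε ≤ s := by
        apply le_csInf hA_ne
        intro t ht
        by_contra hts
        push_neg at hts
        have hst : s ≤ t := csInf_le hA_bdd ht
        have : M < y t := hball ⟨by rw [Metric.mem_ball, Real.dist_eq, abs_lt]; constructor <;> linarith, ht.1⟩
        exact absurd ht.2 (not_le.mpr this)
      linarith
    have hspos : 0 < s := by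
      rcases hs0.lt_or_eq with h | h
      · exact h
      · exfalso; rw [← h] at hys; linarith
    -- y strictly increasing on [0, s]
    have hmono : StrictMonoOn y (Set.Icc 0 s) := by
      apply strictMonoOn_of_deriv_pos (convex_Icc 0 s)
      · exact hcont.mono fun x hx => ⟨hx.1, lt_of_le_of_lt hx.2 hsT⟩
      · intro x hx
        rw [interior_Icc] at hx
        have hxT : x ∈ Set.Ioo (0 : ℝ) T := ⟨hx.1, lt_trans hx.2 hsT⟩
        have hxA : x ∉ A := fun hxA => absurd (csInf_le hA_bdd hxA) (not_le.mpr hx.2)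
        have hMx : M < y x := by
          by_contra hMx
          exact hxA ⟨⟨hx.1.le, hxT.2⟩, not_lt.mp hMx⟩
        have hqx : M ^ q < y x ^ q := Real.rpow_lt_rpow hMpos.le hMx hq0
        have h1 : K * b - b < a * y x ^ q - b := by
          rw [hMq] at hqx
          have := (div_lt_iff₀ ha).mp hqx
          linarith [mul_comm (y x ^ q) a]
        have h2 : 0 < a * y x ^ q - b := by nlinarith
        exact lt_of_lt_of_le h2 (hineq x hxT)
    have : y 0 < y s := hmono ⟨le_refl 0, hs0⟩ ⟨hs0, le_refl s⟩ hspos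
    linarith
  -- Step 2 : y' ≥ c y^q with c = a(K-1)/K
  set c : ℝ := a * (K - 1) / K with hcdef
  have hcpos : 0 < c := by
    apply div_pos (by nlinarith) (by linarith)
  have hbM : b = a * M ^ q / K := by
    rw [hMq]; field_simp
  have step2 : ∀ t ∈ Set.Ioo (0 : ℝ) T, c * y t ^ q ≤ deriv y t := by
    intro t ht
    have hMt : M < y t := key t ⟨ht.1.le, ht.2⟩
    have hqle : M ^ q ≤ y t ^ q := Real.rpow_le_rpow hMpos.le hMt.le hq0.le
    have h1 : a * y t ^ q - b ≤ deriv y t := hineq t ht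
    have hK0 : (0 : ℝ) < K := by linarith
    have hmu : a * M ^ q / K ≤ a * y t ^ q / K := by gcongr
    have expand : c * y t ^ q = a * y t ^ q - a * y t ^ q / K := by
      rw [hcdef]; field_simp
    have : c * y t ^ q ≤ a * y t ^ q - b := by
      rw [hbM, expand]; linarith
    linarith
  -- Step 3 : for each t ∈ [0,T), bound t
  have hy0pos : 0 < y 0 := hpos 0 ⟨le_refl 0, hT⟩
  have bound : ∀ t ∈ Set.Ico (0 : ℝ) T, c * (q - 1) * t < y 0 ^ (1 - q) := by
    intro t ht
    set h : ℝ → ℝ := fun s => y s ^ (1 - q) + c * (q - 1) * s with hhdef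
    have hderiv : ∀ s ∈ Set.Ioo (0 : ℝ) t,
        HasDerivAt h (deriv y s * (1 - q) * y s ^ (1 - q - 1) + c * (q - 1)) s := by
      intro s hs
      have hsT : s ∈ Set.Ioo (0 : ℝ) T := ⟨hs.1, lt_of_lt_of_le hs.2 ht.2.le⟩
      have hys : 0 < y s := hpos s ⟨hsT.1.le, hsT.2⟩
      have h1 : HasDerivAt y (deriv y s) s := (hdiff s hsT).hasDerivAt
      have h2 := h1.rpow_const (p := 1 - q) (Or.inl hys.ne')
      exact HasDerivAt.congr_deriv (h2.add ((hasDerivAt_id s).const_mul (c * (q - 1)))) (by simp)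
    have hderiv_le : ∀ s ∈ Set.Ioo (0 : ℝ) t, deriv h s ≤ 0 := by
      intro s hs
      rw [(hderiv s hs).deriv]
      have hsT : s ∈ Set.Ioo (0 : ℝ) T := ⟨hs.1, lt_of_lt_of_le hs.2 ht.2.le⟩
      have hys : 0 < y s := hpos s ⟨hsT.1.le, hsT.2⟩
      have hD : c * y s ^ q ≤ deriv y s := step2 s hsT
      have hP : (0 : ℝ) < y s ^ (1 - q - 1) := Real.rpow_pos_of_pos hys _
      have hPQ : y s ^ (1 - q - 1) * y s ^ q = 1 := by
        rw [← Real.rpow_add hys, show (1 : ℝ) - q - 1 + q = 0 by ring, Real.rpow_zero]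
      have h1q : (1 : ℝ) - q < 0 := by linarith
      have h5 : c * y s ^ q * y s ^ (1 - q - 1) ≤ deriv y s * y s ^ (1 - q - 1) :=
        mul_le_mul_of_nonneg_right hD hP.le
      have h6 : c * y s ^ q * y s ^ (1 - q - 1) = c := by
        rw [mul_assoc, mul_comm (y s ^ q), hPQ, mul_one]
      have h7 : c ≤ deriv y s * y s ^ (1 - q - 1) := h6 ▸ h5
      have h8 : c * (q - 1) ≤ deriv y s * y s ^ (1 - q - 1) * (q - 1) :=
        mul_le_mul_of_nonneg_right h7 (by linarith)
      nlinarith [h8]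
    have hcontD : ContinuousOn h (Set.Icc 0 t) := by
      apply ContinuousOn.add
      · apply ContinuousOn.rpow_const
        · exact hcont.mono fun x hx => ⟨hx.1, lt_of_le_of_lt hx.2 ht.2⟩
        · intro x hx
          exact Or.inl (hpos x ⟨hx.1, lt_of_le_of_lt hx.2 ht.2⟩).ne'
      · exact (continuous_const.mul continuous_id).continuousOn
    have hanti : AntitoneOn h (Set.Icc 0 t) := by
      apply antitoneOn_of_deriv_nonpos (convex_Icc 0 t) hcontD
      · intro x hx
        rw [interior_Icc] at hx
        exact (hderiv x hx).differentiableAt.differentiableWithinAt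
      · intro x hx
        rw [interior_Icc] at hx
        exact hderiv_le x hx
    have hht : h t ≤ h 0 := hanti ⟨le_refl 0, ht.1⟩ ⟨ht.1, le_refl t⟩ ht.1
    have hyt : 0 < y t ^ (1 - q) := Real.rpow_pos_of_pos (hpos t ht) _
    simp only [hhdef, mul_zero, add_zero] at hht
    linarith
  -- Step 4 : conclude
  have hden : 0 < a * (K - 1) * (q - 1) :=
    mul_pos (mul_pos ha (by linarith)) (by linarith)
  have hBpos : 0 < K * y 0 ^ (1 - q) / (a * (K - 1) * (q - 1)) :=
    div_pos (mul_pos (by linarith) (Real.rpow_pos_of_pos hy0pos _)) hden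
  by_contra hTB
  push_neg at hTB
  set B := K * y 0 ^ (1 - q) / (a * (K - 1) * (q - 1)) with hBdef
  have hBmem : B ∈ Set.Ico (0 : ℝ) T := ⟨hBpos.le, hTB⟩
  have := bound B hBmem
  have hcq : c * (q - 1) * B = y 0 ^ (1 - q) := by
    rw [hBdef, hcdef]
    field_simp [(show (0:ℝ) < K - 1 by linarith).ne', (show (0:ℝ) < q - 1 by linarith).ne', (show (0:ℝ) < K by linarith).ne', ha.ne']
  rw [hcq] at this
  exact lt_irrefl _ this
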